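/- Under the iterative singular value thresholding algorithm with step size τ ∈ (0, 1/max_{it}x_{it}²), the objective gap to the global minimum (Θ̃, M̃) of F satisfies F(Θ_{k+1}, M_{k+1}) − F(Θ̃, M̃) ≤ (1/(kτ)) ‖Θ₁ − Θ̃‖_F² for all k ≥ 1; in particular the objective values converge to the global minimum at rate O(1/k). -/

import Mathlib

open Matrix BigOperators

/-- Squared Frobenius norm of a real matrix. -/
noncomputable def frobSq {m n : ℕ} (A : Matrix (Fin m) (Fin n) ℝ) : ℝ :=
  ∑ i, ∑ j, A i j ^ 2

/-- Singular values of a real matrix: square roots of the eigenvalues of `Aᴴ * A`. -/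
noncomputable def singVals {m n : ℕ} (A : Matrix (Fin m) (Fin n) ℝ) : Fin n → ℝ :=
  fun j => Real.sqrt ((show (Aᵀ * A).IsHermitian by
    simpa using Matrix.isHermitian_conjTranspose_mul_self A).eigenvalues j)

/-- Nuclear norm: sum of the singular values. -/
noncomputable def nuclearNorm {m n : ℕ} (A : Matrix (Fin m) (Fin n) ℝ) : ℝ :=
  ∑ j, singVals A j

/-- Operator (spectral) norm: largest singular value. -/
noncomputable def opNorm {m n : ℕ} (A : Matrix (Fin m) (Fin n) ℝ) : ℝ :=
  ⨆ j, singVals A j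

/-- `B` is the output of the soft singular value thresholding operator `S_lam` applied to `A`,
characterized by its proximal property: `S_lam A` is the minimizer of
`‖A − B‖_F² + 2·lam·‖B‖ₙ` (cf. Statement 9). -/
def IsSVT {N T : ℕ} (lam : ℝ) (A B : Matrix (Fin N) (Fin T) ℝ) : Prop :=
  ∀ C : Matrix (Fin N) (Fin T) ℝ,
    frobSq (A - B) + 2 * lam * nuclearNorm B ≤ frobSq (A - C) + 2 * lam * nuclearNorm C

/-- The nuclear-norm penalized objective `F(Θ, M)`. -/
noncomputable def Fobj {N T : ℕ} (Y X : Matrix (Fin N) (Fin T) ℝ) (ν₁ ν₂ : ℝ)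
    (Θ M : Matrix (Fin N) (Fin T) ℝ) : ℝ :=
  frobSq (Y - M - X ⊙ Θ) + ν₂ * nuclearNorm M + ν₁ * nuclearNorm Θ

namespace Stmt7Aux
variable {N T : ℕ}

/-- entrywise inner product of matrices -/
noncomputable def mip (P Q : Matrix (Fin N) (Fin T) ℝ) : ℝ := ∑ i, ∑ j, P i j * Q i j

lemma mip_comm (P Q : Matrix (Fin N) (Fin T) ℝ) : mip P Q = mip Q P := by
  unfold mip; congr 1; funext i; congr 1; funext j; ring

lemma frobSq_eq_mip (P : Matrix (Fin N) (Fin T) ℝ) : frobSq P = mip P P := by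
  unfold frobSq mip; congr 1; funext i; congr 1; funext j; ring

lemma frobSq_nonneg (P : Matrix (Fin N) (Fin T) ℝ) : 0 ≤ frobSq P := by
  apply Finset.sum_nonneg; intro i _; apply Finset.sum_nonneg; intro j _; positivity

lemma mip_add_right (P Q R : Matrix (Fin N) (Fin T) ℝ) : mip P (Q + R) = mip P Q + mip P R := by
  unfold mip
  rw [← Finset.sum_add_distrib]
  congr 1; funext i
  rw [← Finset.sum_add_distrib]
  congr 1; funext j
  simp [Matrix.add_apply]; ring

lemma mip_sub_right (P Q R : Matrix (Fin N) (Fin T) ℝ) : mip P (Q - R) = mip P Q - mip P R := by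
  unfold mip
  rw [← Finset.sum_sub_distrib]
  congr 1; funext i
  rw [← Finset.sum_sub_distrib]
  congr 1; funext j
  simp [Matrix.sub_apply]; ring

lemma mip_smul_right (c : ℝ) (P Q : Matrix (Fin N) (Fin T) ℝ) : mip P (c • Q) = c * mip P Q := by
  unfold mip
  rw [Finset.mul_sum]
  congr 1; funext i
  rw [Finset.mul_sum]
  congr 1; funext j
  simp [Matrix.smul_apply]; ring

lemma frobSq_sub_expand (P Q : Matrix (Fin N) (Fin T) ℝ) :
    frobSq (P - Q) = frobSq P - 2 * mip P Q + frobSq Q := by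
  simp only [frobSq_eq_mip]
  rw [mip_sub_right, mip_comm (P - Q) P, mip_sub_right, mip_comm (P - Q) Q, mip_sub_right,
    mip_comm Q P]
  ring

lemma frobSq_add_expand (P Q : Matrix (Fin N) (Fin T) ℝ) :
    frobSq (P + Q) = frobSq P + 2 * mip P Q + frobSq Q := by
  simp only [frobSq_eq_mip]
  rw [mip_add_right, mip_comm (P + Q) P, mip_add_right, mip_comm (P + Q) Q, mip_add_right,
    mip_comm Q P]
  ring


variable {N T : ℕ}
noncomputable def muu (A : Matrix (Fin N) (Fin T) ℝ) (j : Fin T) : ℝ :=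
  (show (Aᵀ * A).IsHermitian by simpa using Matrix.isHermitian_conjTranspose_mul_self A).eigenvalues j

noncomputable def ev (A : Matrix (Fin N) (Fin T) ℝ) (j : Fin T) : Fin T → ℝ :=
  ((show (Aᵀ * A).IsHermitian by simpa using Matrix.isHermitian_conjTranspose_mul_self A).eigenvectorBasis j : EuclideanSpace ℝ (Fin T))

lemma muu_nonneg (A : Matrix (Fin N) (Fin T) ℝ) (j : Fin T) : 0 ≤ muu A j :=
  by
    have h := Matrix.eigenvalues_conjTranspose_mul_self_nonneg A j
    simp only [Matrix.conjTranspose_eq_transpose_of_trivial] at h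
    exact h

lemma dot_ev (A : Matrix (Fin N) (Fin T) ℝ) (i j : Fin T) :
    ev A i ⬝ᵥ ev A j = if i = j then 1 else 0 := by
  have h := (show (Aᵀ * A).IsHermitian by simpa using Matrix.isHermitian_conjTranspose_mul_self A).eigenvectorBasis.orthonormal
  rw [orthonormal_iff_ite] at h
  have := h i j
  rw [PiLp.inner_apply] at this
  simpa [dotProduct, ev, mul_comm] using this

lemma ata_mulVec_ev (A : Matrix (Fin N) (Fin T) ℝ) (j : Fin T) :
    (Aᴴ * A) *ᵥ ev A j = muu A j • ev A j :=
  by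
    have h := (show (Aᵀ * A).IsHermitian by simpa using Matrix.isHermitian_conjTranspose_mul_self A).mulVec_eigenvectorBasis j
    rw [Matrix.conjTranspose_eq_transpose_of_trivial]
    exact h

lemma dot_mulVec_mulVec (A : Matrix (Fin N) (Fin T) ℝ) (x y : Fin T → ℝ) :
    (A *ᵥ x) ⬝ᵥ (A *ᵥ y) = x ⬝ᵥ ((Aᴴ * A) *ᵥ y) := by
  rw [Matrix.conjTranspose_eq_transpose_of_trivial, ← Matrix.mulVec_mulVec,
    dotProduct_mulVec x, Matrix.vecMul_transpose]

lemma dot_Aev (A : Matrix (Fin N) (Fin T) ℝ) (i j : Fin T) :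
    (A *ᵥ ev A i) ⬝ᵥ (A *ᵥ ev A j) = if i = j then muu A j else 0 := by
  rw [dot_mulVec_mulVec, ata_mulVec_ev, dotProduct_smul, smul_eq_mul, dot_ev]
  split <;> ring

/-- expansion of any vector in the eigenbasis, entrywise -/
lemma ev_expand (A : Matrix (Fin N) (Fin T) ℝ) (w : Fin T → ℝ) (t : Fin T) :
    w t = ∑ j, (ev A j ⬝ᵥ w) * ev A j t := by
  set b := (show (Aᵀ * A).IsHermitian by simpa using Matrix.isHermitian_conjTranspose_mul_self A).eigenvectorBasis with hb
  have h := b.sum_repr' (x := WithLp.toLp 2 w)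
  have h2 := congrFun (congrArg (fun z : EuclideanSpace ℝ (Fin T) => (z : Fin T → ℝ)) h) t
  simp only [PiLp.inner_apply, RCLike.inner_apply, starRingEnd_apply, star_trivial,
    WithLp.ofLp_toLp] at h2
  rw [← h2]
  have h3 := map_sum (EuclideanSpace.projₗ t (𝕜 := ℝ) (ι := Fin T))
    (fun j => ((∑ s, (b j : EuclideanSpace ℝ (Fin T)) s * w s) •
      (b j : EuclideanSpace ℝ (Fin T)))) Finset.univ
  simp only [_root_.map_smul, smul_eq_mul] at h3
  simp only [WithLp.ofLp_sum, WithLp.ofLp_smul, Finset.sum_apply, Pi.smul_apply, smul_eq_mul]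
  refine Finset.sum_congr rfl fun j _ => ?_
  simp [ev, dotProduct, hb, mul_comm]

noncomputable def uu (A : Matrix (Fin N) (Fin T) ℝ) (j : Fin T) : Fin N → ℝ :=
  if muu A j = 0 then 0 else (Real.sqrt (muu A j))⁻¹ • (A *ᵥ ev A j)

lemma sqrt_muu_pos {A : Matrix (Fin N) (Fin T) ℝ} {j : Fin T} (h : muu A j ≠ 0) :
    0 < Real.sqrt (muu A j) :=
  Real.sqrt_pos.2 (lt_of_le_of_ne (muu_nonneg A j) (Ne.symm h))

lemma Av_eq (A : Matrix (Fin N) (Fin T) ℝ) (j : Fin T) :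
    A *ᵥ ev A j = Real.sqrt (muu A j) • uu A j := by
  by_cases h : muu A j = 0
  · have h0 : (A *ᵥ ev A j) ⬝ᵥ (A *ᵥ ev A j) = 0 := by rw [dot_Aev]; simp [h]
    rw [dotProduct_self_eq_zero] at h0
    simp [uu, h, h0]
  · rw [uu, if_neg h, smul_smul, mul_inv_cancel₀ (ne_of_gt (sqrt_muu_pos h)), one_smul]

lemma dot_uu (A : Matrix (Fin N) (Fin T) ℝ) (i j : Fin T) :
    uu A i ⬝ᵥ uu A j = if i = j ∧ muu A j ≠ 0 then 1 else 0 := by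
  by_cases hi : muu A i = 0
  · by_cases hij : i = j
    · subst hij; simp [uu, hi]
    · simp [uu, hi, hij]
  · by_cases hj : muu A j = 0
    · simp [uu, hj, fun h : i = j => hi (h ▸ hj)]
    · rw [uu, if_neg hi, uu, if_neg hj, smul_dotProduct, dotProduct_smul,
        dot_Aev]
      by_cases hij : i = j
      · subst hij
        simp only [smul_eq_mul, if_true, true_and, ne_eq, hi, not_false_eq_true, ite_true,
          if_pos]
        rw [← mul_assoc, ← mul_inv]
        rw [← Real.sqrt_mul_self (muu_nonneg A i)] at hi ⊢
        field_simp
        rw [Real.sq_sqrt (Real.sqrt_nonneg _)]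
      · simp [hij]

lemma dot_uu_self_le (A : Matrix (Fin N) (Fin T) ℝ) (j : Fin T) :
    uu A j ⬝ᵥ uu A j ≤ 1 := by
  rw [dot_uu]; split <;> norm_num

lemma dot_uu_Av (A : Matrix (Fin N) (Fin T) ℝ) (j : Fin T) :
    uu A j ⬝ᵥ (A *ᵥ ev A j) = Real.sqrt (muu A j) := by
  rw [Av_eq, dotProduct_smul, dot_uu, smul_eq_mul]
  by_cases h : muu A j = 0
  · simp [h]
  · simp [h]

lemma nuclear_eq_sum (A : Matrix (Fin N) (Fin T) ℝ) :
    nuclearNorm A = ∑ j, Real.sqrt (muu A j) := rfl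

lemma nuclear_eq_sum_dot (A : Matrix (Fin N) (Fin T) ℝ) :
    nuclearNorm A = ∑ j, uu A j ⬝ᵥ (A *ᵥ ev A j) := by
  rw [nuclear_eq_sum]
  exact Finset.sum_congr rfl fun j _ => (dot_uu_Av A j).symm

lemma dotProduct_sum_right {n r : ℕ} (v : Fin n → ℝ) (f : Fin r → Fin n → ℝ) :
    v ⬝ᵥ (∑ j, f j) = ∑ j, v ⬝ᵥ f j := by
  simp only [dotProduct, Finset.sum_apply, Finset.mul_sum]
  exact Finset.sum_comm

lemma sum_dotProduct_left {n r : ℕ} (v : Fin n → ℝ) (f : Fin r → Fin n → ℝ) :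
    (∑ j, f j) ⬝ᵥ v = ∑ j, f j ⬝ᵥ v := by
  rw [dotProduct_comm, dotProduct_sum_right]
  exact Finset.sum_congr rfl fun j _ => dotProduct_comm _ _

lemma dot_self_nonneg {n : ℕ} (v : Fin n → ℝ) : 0 ≤ v ⬝ᵥ v :=
  Finset.sum_nonneg fun i _ => mul_self_nonneg _

/-- Bessel-type inequality for an "orthonormal or zero"-ish family. -/
lemma bessel {n r : ℕ} (f : Fin r → (Fin n → ℝ))
    (horth : ∀ i j, i ≠ j → f i ⬝ᵥ f j = 0) (hself : ∀ j, f j ⬝ᵥ f j ≤ 1)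
    (w : Fin n → ℝ) : ∑ j, (f j ⬝ᵥ w) ^ 2 ≤ w ⬝ᵥ w := by
  set c : Fin r → ℝ := fun j => f j ⬝ᵥ w with hc
  set S : Fin n → ℝ := ∑ j, c j • f j with hS
  have hwS : w ⬝ᵥ S = ∑ j, c j ^ 2 := by
    rw [hS, dotProduct_sum_right]
    refine Finset.sum_congr rfl fun j _ => ?_
    rw [dotProduct_smul, smul_eq_mul, dotProduct_comm]
    rw [hc]; ring
  have hSw : S ⬝ᵥ w = ∑ j, c j ^ 2 := by rw [dotProduct_comm]; exact hwS
  have hSS : S ⬝ᵥ S = ∑ j, c j ^ 2 * (f j ⬝ᵥ f j) := by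
    rw [hS, sum_dotProduct_left]
    refine Finset.sum_congr rfl fun j _ => ?_
    rw [smul_dotProduct, dotProduct_sum_right, smul_eq_mul, Finset.mul_sum]
    rw [Finset.sum_eq_single j]
    · rw [dotProduct_smul, smul_eq_mul]; ring
    · intro k _ hk
      rw [dotProduct_smul, horth j k (Ne.symm hk)]
      simp
    · simp
  have hg : 0 ≤ (w - S) ⬝ᵥ (w - S) := dot_self_nonneg _
  rw [sub_dotProduct, dotProduct_sub, dotProduct_sub, hwS, hSw, hSS] at hg
  have e2 : ∑ j, c j ^ 2 * (f j ⬝ᵥ f j) ≤ ∑ j, c j ^ 2 := by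
    refine Finset.sum_le_sum fun j _ => ?_
    have := hself j
    nlinarith [sq_nonneg (c j), dot_self_nonneg (f j)]
  linarith

lemma mulVec_expand (A : Matrix (Fin N) (Fin T) ℝ) (w : Fin T → ℝ) :
    A *ᵥ w = ∑ i, (ev A i ⬝ᵥ w) • (A *ᵥ ev A i) := by
  funext p
  rw [Finset.sum_apply]
  simp only [Pi.smul_apply, smul_eq_mul]
  calc (A *ᵥ w) p = ∑ t, A p t * w t := rfl
    _ = ∑ t, A p t * ∑ i, (ev A i ⬝ᵥ w) * ev A i t := by
        refine Finset.sum_congr rfl fun t _ => ?_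
        rw [← ev_expand A w t]
    _ = ∑ t, ∑ i, (ev A i ⬝ᵥ w) * (A p t * ev A i t) := by
        refine Finset.sum_congr rfl fun t _ => ?_
        rw [Finset.mul_sum]
        exact Finset.sum_congr rfl fun i _ => by ring
    _ = ∑ i, ∑ t, (ev A i ⬝ᵥ w) * (A p t * ev A i t) := Finset.sum_comm
    _ = ∑ i, (ev A i ⬝ᵥ w) * (A *ᵥ ev A i) p := by
        refine Finset.sum_congr rfl fun i _ => ?_
        rw [← Finset.mul_sum]; rfl

/-- von Neumann-type upper bound. -/
lemma sum_dot_le_nuclear (A : Matrix (Fin N) (Fin T) ℝ) (p : Fin T → Fin N → ℝ)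
    (q : Fin T → Fin T → ℝ)
    (hpo : ∀ i j, i ≠ j → p i ⬝ᵥ p j = 0) (hps : ∀ j, p j ⬝ᵥ p j ≤ 1)
    (hqo : ∀ i j, i ≠ j → q i ⬝ᵥ q j = 0) (hqs : ∀ j, q j ⬝ᵥ q j ≤ 1) :
    ∑ j, p j ⬝ᵥ (A *ᵥ q j) ≤ nuclearNorm A := by
  have step1 : ∀ j, p j ⬝ᵥ (A *ᵥ q j)
      = ∑ i, Real.sqrt (muu A i) * ((ev A i ⬝ᵥ q j) * (p j ⬝ᵥ uu A i)) := by
    intro j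
    rw [mulVec_expand A (q j), dotProduct_sum_right]
    refine Finset.sum_congr rfl fun i _ => ?_
    rw [Av_eq, dotProduct_smul, dotProduct_smul]
    simp only [smul_eq_mul]; ring
  calc ∑ j, p j ⬝ᵥ (A *ᵥ q j)
      = ∑ j, ∑ i, Real.sqrt (muu A i) * ((ev A i ⬝ᵥ q j) * (p j ⬝ᵥ uu A i)) :=
        Finset.sum_congr rfl fun j _ => step1 j
    _ = ∑ i, Real.sqrt (muu A i) * ∑ j, (ev A i ⬝ᵥ q j) * (p j ⬝ᵥ uu A i) := by
        rw [Finset.sum_comm]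
        exact Finset.sum_congr rfl fun i _ => by rw [Finset.mul_sum]
    _ ≤ ∑ i, Real.sqrt (muu A i) * 1 := by
        refine Finset.sum_le_sum fun i _ => ?_
        refine mul_le_mul_of_nonneg_left ?_ (Real.sqrt_nonneg _)
        have hcs := Finset.sum_mul_sq_le_sq_mul_sq Finset.univ
          (fun j => ev A i ⬝ᵥ q j) (fun j => p j ⬝ᵥ uu A i)
        have h1 : ∑ j, (ev A i ⬝ᵥ q j) ^ 2 ≤ 1 := by
          have := bessel q hqo hqs (ev A i)
          calc ∑ j, (ev A i ⬝ᵥ q j) ^ 2 = ∑ j, (q j ⬝ᵥ ev A i) ^ 2 := by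
                refine Finset.sum_congr rfl fun j _ => by rw [dotProduct_comm]
            _ ≤ ev A i ⬝ᵥ ev A i := this
            _ = 1 := by rw [dot_ev]; simp
        have h2 : ∑ j, (p j ⬝ᵥ uu A i) ^ 2 ≤ 1 := by
          have := bessel p hpo hps (uu A i)
          calc ∑ j, (p j ⬝ᵥ uu A i) ^ 2 ≤ uu A i ⬝ᵥ uu A i := this
            _ ≤ 1 := dot_uu_self_le A i
        nlinarith [sq_nonneg (∑ j, (ev A i ⬝ᵥ q j) * (p j ⬝ᵥ uu A i)),
          Finset.sum_nonneg (fun j (_ : j ∈ Finset.univ) => sq_nonneg (ev A i ⬝ᵥ q j)),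
          Finset.sum_nonneg (fun j (_ : j ∈ Finset.univ) => sq_nonneg (p j ⬝ᵥ uu A i))]
    _ = nuclearNorm A := by rw [nuclear_eq_sum]; simp

lemma uu_orth (A : Matrix (Fin N) (Fin T) ℝ) :
    ∀ i j, i ≠ j → uu A i ⬝ᵥ uu A j = 0 := by
  intro i j hij; rw [dot_uu]; simp [hij]

lemma ev_orth (A : Matrix (Fin N) (Fin T) ℝ) :
    ∀ i j, i ≠ j → ev A i ⬝ᵥ ev A j = 0 := by
  intro i j hij; rw [dot_ev]; simp [hij]

lemma ev_self_le (A : Matrix (Fin N) (Fin T) ℝ) : ∀ j, ev A j ⬝ᵥ ev A j ≤ 1 := by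
  intro j; rw [dot_ev]; simp

/-- Convexity inequality for the nuclear norm. -/
lemma nuclearNorm_convex (P Q : Matrix (Fin N) (Fin T) ℝ) (s t : ℝ)
    (hs : 0 ≤ s) (ht : 0 ≤ t) (hst : s + t = 1) :
    nuclearNorm (s • P + t • Q) ≤ s * nuclearNorm P + t * nuclearNorm Q := by
  set B := s • P + t • Q with hB
  have expand : ∀ j, uu B j ⬝ᵥ (B *ᵥ ev B j)
      = s * (uu B j ⬝ᵥ (P *ᵥ ev B j)) + t * (uu B j ⬝ᵥ (Q *ᵥ ev B j)) := by
    intro j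
    rw [hB, Matrix.add_mulVec, dotProduct_add, Matrix.smul_mulVec,
      Matrix.smul_mulVec, dotProduct_smul, dotProduct_smul]
    simp [smul_eq_mul]
  calc nuclearNorm B = ∑ j, uu B j ⬝ᵥ (B *ᵥ ev B j) := nuclear_eq_sum_dot B
    _ = s * (∑ j, uu B j ⬝ᵥ (P *ᵥ ev B j)) + t * (∑ j, uu B j ⬝ᵥ (Q *ᵥ ev B j)) := by
        rw [Finset.mul_sum, Finset.mul_sum, ← Finset.sum_add_distrib]
        exact Finset.sum_congr rfl fun j _ => expand j
    _ ≤ s * nuclearNorm P + t * nuclearNorm Q := by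
        have h1 := sum_dot_le_nuclear P (uu B) (ev B) (uu_orth B) (dot_uu_self_le B)
          (ev_orth B) (ev_self_le B)
        have h2 := sum_dot_le_nuclear Q (uu B) (ev B) (uu_orth B) (dot_uu_self_le B)
          (ev_orth B) (ev_self_le B)
        have := mul_le_mul_of_nonneg_left h1 hs
        have := mul_le_mul_of_nonneg_left h2 ht
        linarith

/-- Three-point property of the SVT prox operator. -/
lemma three_point {lam : ℝ} (hlam : 0 ≤ lam) {A B : Matrix (Fin N) (Fin T) ℝ}
    (h : IsSVT lam A B) (C : Matrix (Fin N) (Fin T) ℝ) :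
    frobSq (A - B) + 2 * lam * nuclearNorm B + frobSq (B - C) ≤
      frobSq (A - C) + 2 * lam * nuclearNorm C := by
  set L : ℝ := 2 * lam * (nuclearNorm B - nuclearNorm C) + 2 * mip (A - B) (C - B) with hL
  have key : ∀ t : ℝ, 0 < t → t ≤ 1 → L ≤ t * frobSq (C - B) := by
    intro t ht0 ht1
    have hz := h (B + t • (C - B))
    have hconv : nuclearNorm (B + t • (C - B)) ≤
        (1 - t) * nuclearNorm B + t * nuclearNorm C := by
      have : B + t • (C - B) = (1 - t) • B + t • C := by
        ext i j; simp [Matrix.add_apply, Matrix.sub_apply, Matrix.smul_apply, smul_eq_mul]; ring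
      rw [this]
      exact nuclearNorm_convex B C (1 - t) t (by linarith) (le_of_lt ht0) (by ring)
    have hfs : frobSq (A - (B + t • (C - B))) =
        frobSq (A - B) - 2 * t * mip (A - B) (C - B) + t ^ 2 * frobSq (C - B) := by
      have : A - (B + t • (C - B)) = (A - B) - t • (C - B) := by
        ext i j; simp [Matrix.add_apply, Matrix.sub_apply, Matrix.smul_apply, smul_eq_mul]; ring
      rw [this, frobSq_sub_expand, mip_smul_right]
      have : frobSq (t • (C - B)) = t ^ 2 * frobSq (C - B) := by
        rw [frobSq_eq_mip, frobSq_eq_mip, mip_smul_right, mip_comm, mip_smul_right]; ring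
      rw [this]; ring
    have h2 : 2 * lam * nuclearNorm B ≤ frobSq (A - (B + t • (C - B))) -
        frobSq (A - B) + 2 * lam * nuclearNorm (B + t • (C - B)) := by linarith
    rw [hfs] at h2
    have hmul : 2 * lam * nuclearNorm (B + t • (C - B)) ≤
        2 * lam * ((1 - t) * nuclearNorm B + t * nuclearNorm C) := by
      apply mul_le_mul_of_nonneg_left hconv; linarith
    have h3 : t * L ≤ t ^ 2 * frobSq (C - B) := by rw [hL]; nlinarith
    have := (mul_le_mul_iff_right₀ ht0).1 (by nlinarith : t * L ≤ t * (t * frobSq (C - B)))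
    nlinarith
  have hL0 : L ≤ 0 := by
    by_contra hpos
    push_neg at hpos
    have hfs0 : 0 ≤ frobSq (C - B) := frobSq_nonneg _
    set t : ℝ := min 1 (L / (2 * (frobSq (C - B) + 1))) with htdef
    have ht0 : 0 < t := by
      apply lt_min one_pos
      apply div_pos hpos; linarith
    have ht1 : t ≤ 1 := min_le_left _ _
    have := key t ht0 ht1
    have htle : t ≤ L / (2 * (frobSq (C - B) + 1)) := min_le_right _ _
    have h4 : t * frobSq (C - B) ≤ L / (2 * (frobSq (C - B) + 1)) * frobSq (C - B) :=
      mul_le_mul_of_nonneg_right htle hfs0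
    have h5 : L / (2 * (frobSq (C - B) + 1)) * frobSq (C - B) < L := by
      rw [div_mul_eq_mul_div, div_lt_iff₀ (by linarith)]
      nlinarith
    linarith
  have hexp : frobSq (A - C) = frobSq (A - B) + 2 * mip (A - B) (B - C) + frobSq (B - C) := by
    have : A - C = (A - B) + (B - C) := by ext i j; simp [Matrix.sub_apply, Matrix.add_apply]
    rw [this, frobSq_add_expand]
  have hmipflip : mip (A - B) (B - C) = - mip (A - B) (C - B) := by
    have h1 := mip_sub_right (A - B) B C
    have h2 := mip_sub_right (A - B) C B
    linarith
  rw [hexp]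
  rw [hL] at hL0
  linarith

lemma mip_had (X P Q : Matrix (Fin N) (Fin T) ℝ) : mip (X ⊙ P) Q = mip P (X ⊙ Q) := by
  unfold mip
  congr 1; funext i; congr 1; funext j
  simp [Matrix.hadamard_apply]
  ring

lemma mip_sub_left (P Q R : Matrix (Fin N) (Fin T) ℝ) : mip (P - Q) R = mip P R - mip Q R := by
  rw [mip_comm, mip_sub_right, mip_comm R P, mip_comm R Q]

lemma mip_neg_right (P Q : Matrix (Fin N) (Fin T) ℝ) : mip P (-Q) = - mip P Q := by
  have h := mip_sub_right P 0 Q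
  have h0 : mip P (0 - Q) = mip P (-Q) := by rw [zero_sub]
  have h1 : mip P (0 : Matrix (Fin N) (Fin T) ℝ) = 0 := by
    have := mip_sub_right P 0 0
    simp at this
    linarith [this]
  rw [h0] at h; rw [h] at *; rw [h1]; ring

lemma frobSq_smul (c : ℝ) (P : Matrix (Fin N) (Fin T) ℝ) :
    frobSq (c • P) = c ^ 2 * frobSq P := by
  rw [frobSq_eq_mip, frobSq_eq_mip, mip_smul_right, mip_comm, mip_smul_right]; ring

lemma frobSq_sub_comm (P Q : Matrix (Fin N) (Fin T) ℝ) :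
    frobSq (P - Q) = frobSq (Q - P) := by
  rw [frobSq_sub_expand, frobSq_sub_expand, mip_comm]; ring

lemma frobSq_self_sub (P : Matrix (Fin N) (Fin T) ℝ) : frobSq (P - P) = 0 := by
  have := frobSq_sub_expand P P
  rw [frobSq_eq_mip P] at this
  linarith [this]

lemma frobSq_had_le {τ : ℝ} (hτ : 0 < τ) {X : Matrix (Fin N) (Fin T) ℝ}
    (hτX : ∀ i t, τ * X i t ^ 2 < 1) (D : Matrix (Fin N) (Fin T) ℝ) :
    τ * frobSq (X ⊙ D) ≤ frobSq D := by
  unfold frobSq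
  rw [Finset.mul_sum]
  refine Finset.sum_le_sum fun i _ => ?_
  rw [Finset.mul_sum]
  refine Finset.sum_le_sum fun t _ => ?_
  have h := hτX i t
  have hd := sq_nonneg (D i t)
  have : τ * (X ⊙ D) i t ^ 2 = (τ * X i t ^ 2) * D i t ^ 2 := by
    simp [Matrix.hadamard_apply]; ring
  rw [this]
  nlinarith

/-- master per-step inequality -/
lemma step_master (Y X : Matrix (Fin N) (Fin T) ℝ) (ν₁ ν₂ τ : ℝ)
    (hν₁ : 0 < ν₁) (hν₂ : 0 < ν₂) (hτ : 0 < τ) (hτX : ∀ i t, τ * X i t ^ 2 < 1)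
    (Θ M : ℕ → Matrix (Fin N) (Fin T) ℝ)
    (hΘ : ∀ k, IsSVT (τ * ν₁ / 2) (Θ k - τ • (X ⊙ (X ⊙ Θ k - Y + M k))) (Θ (k + 1)))
    (hM : ∀ k, IsSVT (ν₂ / 2) (Y - X ⊙ Θ (k + 1)) (M (k + 1)))
    (j : ℕ) (hj : 1 ≤ j) (C Mc : Matrix (Fin N) (Fin T) ℝ) :
    τ * Fobj Y X ν₁ ν₂ (Θ (j + 1)) (M (j + 1)) ≤
      τ * Fobj Y X ν₁ ν₂ C Mc + frobSq (Θ j - C) - frobSq (Θ (j + 1) - C) := by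
  obtain ⟨m, rfl⟩ : ∃ m, j = m + 1 := ⟨j - 1, (Nat.succ_pred_eq_of_pos hj).symm⟩
  set Θj := Θ (m + 1) with hΘjdef
  set B := Θ (m + 1 + 1) with hBdef
  set Mj := M (m + 1) with hMjdef
  set Mn := M (m + 1 + 1) with hMndef
  set G := X ⊙ (X ⊙ Θj - Y + Mj) with hGdef
  set W := Y - X ⊙ Θj with hWdef
  -- atoms
  set a1 := mip G B with ha1
  set a2 := mip G Θj with ha2
  set a3 := mip G C with ha3
  -- (F1)
  have hF1 : frobSq (Y - Mn - X ⊙ B) + ν₂ * nuclearNorm Mn + ν₁ * nuclearNorm B ≤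
      frobSq (Y - Mj - X ⊙ B) + ν₂ * nuclearNorm Mj + ν₁ * nuclearNorm B := by
    have h := hM (m + 1) Mj
    have e1 : Y - Mn - X ⊙ B = Y - X ⊙ B - Mn := sub_right_comm _ _ _
    have e2 : Y - Mj - X ⊙ B = Y - X ⊙ B - Mj := sub_right_comm _ _ _
    rw [e1, e2]
    have hc : (2 : ℝ) * (ν₂ / 2) = ν₂ := by ring
    rw [hc] at h
    linarith
  -- (F2)
  have hF2 : frobSq (Y - Mj - X ⊙ B) =
      frobSq (Y - Mj - X ⊙ Θj) + 2 * (a1 - a2) + frobSq (X ⊙ (B - Θj)) := by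
    have idR : Y - Mj - X ⊙ B = (Y - Mj - X ⊙ Θj) - X ⊙ (B - Θj) := by
      ext i t
      simp [Matrix.sub_apply, Matrix.hadamard_apply]
      ring
    rw [idR, frobSq_sub_expand]
    have hmg : mip (Y - Mj - X ⊙ Θj) (X ⊙ (B - Θj)) = -(a1 - a2) := by
      rw [mip_comm, mip_had]
      have idX : X ⊙ (Y - Mj - X ⊙ Θj) = -G := by
        ext i t
        simp [Matrix.sub_apply, Matrix.add_apply, Matrix.hadamard_apply, Matrix.neg_apply, hGdef]
        ring
      rw [idX, mip_neg_right, mip_sub_left, mip_comm B G, mip_comm Θj G, ← ha1, ← ha2]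
    rw [hmg]; ring
  -- (F3)
  have hF3 : τ * frobSq (X ⊙ (B - Θj)) ≤ frobSq (B - Θj) := frobSq_had_le hτ hτX _
  -- (F4)
  have hF4 : frobSq (B - Θj) - 2 * τ * (a2 - a1) + τ * ν₁ * nuclearNorm B +
      frobSq (B - C) ≤
      frobSq (Θj - C) - 2 * τ * (a2 - a3) + τ * ν₁ * nuclearNorm C := by
    have hlam : (0 : ℝ) ≤ τ * ν₁ / 2 := by positivity
    have h := three_point hlam (hΘ (m + 1)) C
    have eA : ∀ Z : Matrix (Fin N) (Fin T) ℝ, frobSq (Θj - τ • G - Z) =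
        frobSq (Θj - Z) - 2 * τ * (a2 - mip G Z) + τ ^ 2 * frobSq G := by
      intro Z
      have idA : Θj - τ • G - Z = (Θj - Z) - τ • G := sub_right_comm _ _ _
      rw [idA, frobSq_sub_expand, mip_smul_right, frobSq_smul]
      have : mip (Θj - Z) G = a2 - mip G Z := by
        rw [mip_sub_left, mip_comm Θj G, mip_comm Z G, ha2]
      rw [this]; ring
    rw [eA B, eA C] at h
    have hc : (2 : ℝ) * (τ * ν₁ / 2) = τ * ν₁ := by ring
    rw [hc] at h
    have hBΘ : frobSq (Θj - B) = frobSq (B - Θj) := frobSq_sub_comm _ _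
    rw [hBΘ] at h
    rw [← ha1, ← ha3] at h
    linarith
  -- (F5)
  have hF5 : frobSq (Y - Mj - X ⊙ Θj) + ν₂ * nuclearNorm Mj + 2 * (a3 - a2) ≤
      frobSq (Y - Mc - X ⊙ C) + ν₂ * nuclearNorm Mc := by
    set δ := X ⊙ Θj - X ⊙ C with hδ
    have hMj' : IsSVT (ν₂ / 2) W Mj := hM m
    have threeM := three_point (by positivity : (0:ℝ) ≤ ν₂ / 2) hMj' Mc
    have hc : (2 : ℝ) * (ν₂ / 2) = ν₂ := by ring
    rw [hc] at threeM
    set b1 := mip Mj δ with hb1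
    set b2 := mip W δ with hb2
    set b3 := mip Mc δ with hb3
    have e1 : frobSq (Y - Mc - X ⊙ C) = frobSq (W - Mc) + 2 * (b2 - b3) + frobSq δ := by
      have idW : Y - Mc - X ⊙ C = (W - Mc) + δ := by
        ext i t
        simp [Matrix.sub_apply, Matrix.add_apply, Matrix.hadamard_apply, hWdef, hδ]
        ring
      rw [idW, frobSq_add_expand, mip_sub_left, ← hb2, ← hb3]
    have e2 : a3 - a2 = b2 - b1 := by
      have idG : mip G (C - Θj) = mip (Mj - W) (X ⊙ (C - Θj)) := by
        have : G = X ⊙ (Mj - W) := by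
          ext i t
          simp only [Matrix.sub_apply, Matrix.add_apply, Matrix.hadamard_apply, hWdef, hGdef]
          ring
        rw [this, mip_had]
      have idδ : X ⊙ (C - Θj) = -δ := by
        ext i t
        simp [Matrix.sub_apply, Matrix.hadamard_apply, Matrix.neg_apply, hδ]
        ring
      rw [idδ, mip_neg_right, mip_sub_left] at idG
      rw [mip_sub_right] at idG
      rw [← ha3, ← ha2] at idG
      rw [← hb1] at idG
      rw [← hb2] at idG
      linarith
    have e3 : 0 ≤ frobSq (Mj - Mc) + 2 * (b1 - b3) + frobSq δ := by
      have := frobSq_nonneg ((Mj - Mc) + δ)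
      rw [frobSq_add_expand, mip_sub_left, ← hb1, ← hb3] at this
      linarith
    have e4 : frobSq (Y - Mj - X ⊙ Θj) = frobSq (W - Mj) := by
      rw [hWdef, sub_right_comm]
    rw [e4]
    linarith
  -- combine
  simp only [Fobj]
  have t1 := mul_le_mul_of_nonneg_left hF1 hτ.le
  have t2 : τ * frobSq (Y - Mj - X ⊙ B) =
      τ * (frobSq (Y - Mj - X ⊙ Θj) + 2 * (a1 - a2) + frobSq (X ⊙ (B - Θj))) := by
    rw [hF2]
  have t5 := mul_le_mul_of_nonneg_left hF5 hτ.le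
  nlinarith [hF3, hF4, t1, t2, t5]


end Stmt7Aux

/-- O(1/k) convergence to the global minimum. If `(Θ̃, M̃)` is a global
minimizer of `F`, then under the SVT iteration with step size `τ ∈ (0, 1/max_{it} x_{it}²)`,
`F(Θ_{k+1}, M_{k+1}) − F(Θ̃, M̃) ≤ (1/(kτ)) ‖Θ₁ − Θ̃‖_F²` for all `k ≥ 1`. -/
theorem stmt7 {N T : ℕ} (Y X : Matrix (Fin N) (Fin T) ℝ) (ν₁ ν₂ τ : ℝ)
    (hν₁ : 0 < ν₁) (hν₂ : 0 < ν₂) (hτ : 0 < τ) (hτX : ∀ i t, τ * X i t ^ 2 < 1)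
    (Θ M : ℕ → Matrix (Fin N) (Fin T) ℝ)
    (hΘ : ∀ k, IsSVT (τ * ν₁ / 2) (Θ k - τ • (X ⊙ (X ⊙ Θ k - Y + M k))) (Θ (k + 1)))
    (hM : ∀ k, IsSVT (ν₂ / 2) (Y - X ⊙ Θ (k + 1)) (M (k + 1)))
    (Θt Mt : Matrix (Fin N) (Fin T) ℝ)
    (hmin : ∀ Θ' M' : Matrix (Fin N) (Fin T) ℝ, Fobj Y X ν₁ ν₂ Θt Mt ≤ Fobj Y X ν₁ ν₂ Θ' M') :
    ∀ k : ℕ, 1 ≤ k →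
      Fobj Y X ν₁ ν₂ (Θ (k + 1)) (M (k + 1)) - Fobj Y X ν₁ ν₂ Θt Mt ≤
        1 / ((k : ℝ) * τ) * frobSq (Θ 1 - Θt) := by
  classical
  open Stmt7Aux in
  intro k hk
  set Fstar := Fobj Y X ν₁ ν₂ Θt Mt with hFstar
  have descent : ∀ j : ℕ, 1 ≤ j →
      τ * Fobj Y X ν₁ ν₂ (Θ (j + 1)) (M (j + 1)) ≤
        τ * Fstar + frobSq (Θ j - Θt) - frobSq (Θ (j + 1) - Θt) := by
    intro j hj
    exact step_master Y X ν₁ ν₂ τ hν₁ hν₂ hτ hτX Θ M hΘ hM j hj Θt Mt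
  have mono : ∀ j : ℕ, 1 ≤ j →
      Fobj Y X ν₁ ν₂ (Θ (j + 1 + 1)) (M (j + 1 + 1)) ≤
        Fobj Y X ν₁ ν₂ (Θ (j + 1)) (M (j + 1)) := by
    intro j hj
    have h := step_master Y X ν₁ ν₂ τ hν₁ hν₂ hτ hτX Θ M hΘ hM (j + 1) (by omega)
      (Θ (j + 1)) (M (j + 1))
    rw [frobSq_self_sub] at h
    have h2 := frobSq_nonneg (Θ (j + 1 + 1) - Θ (j + 1))
    have h3 : τ * Fobj Y X ν₁ ν₂ (Θ (j + 1 + 1)) (M (j + 1 + 1)) ≤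
        τ * Fobj Y X ν₁ ν₂ (Θ (j + 1)) (M (j + 1)) := by linarith
    exact le_of_mul_le_mul_left h3 hτ
  have claim : ∀ n : ℕ, 1 ≤ n →
      (n : ℝ) * (τ * (Fobj Y X ν₁ ν₂ (Θ (n + 1)) (M (n + 1)) - Fstar)) ≤
        frobSq (Θ 1 - Θt) - frobSq (Θ (n + 1) - Θt) := by
    intro n hn
    induction n, hn using Nat.le_induction with
    | base =>
        have h := descent 1 le_rfl
        push_cast
        linarith
    | succ n hn ih =>
        have hmono := mono n hn
        have hdesc := descent (n + 1) (by omega)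
        have hτm : τ * (Fobj Y X ν₁ ν₂ (Θ (n + 1 + 1)) (M (n + 1 + 1)) - Fstar) ≤
            τ * (Fobj Y X ν₁ ν₂ (Θ (n + 1)) (M (n + 1)) - Fstar) := by nlinarith
        have hk0 : (0 : ℝ) ≤ (n : ℝ) := Nat.cast_nonneg n
        have hkk := mul_le_mul_of_nonneg_left hτm hk0
        push_cast
        nlinarith
  have h := claim k hk
  have hd := frobSq_nonneg (Θ (k + 1) - Θt)
  have hkpos : (0 : ℝ) < (k : ℝ) := by exact_mod_cast Nat.lt_of_lt_of_le Nat.zero_lt_one hk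
  have hkτ : (0 : ℝ) < (k : ℝ) * τ := mul_pos hkpos hτ
  have heq : 1 / ((k : ℝ) * τ) * frobSq (Θ 1 - Θt) = frobSq (Θ 1 - Θt) / ((k : ℝ) * τ) := by
    ring
  rw [heq, le_div_iff₀ hkτ]
  nlinarith
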